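/- Let H be a hypergraph with finitely many vertices and let s, C, and r be positive integers. Define the hypergraph T̃_{H,C,s} with vertex set V(H) and edge set {A ⊆ V(H) : |A| − alt_s(H[A]) > (s−1)C}. Then alt_r(T̃_{H,C,s}) ≤ r(s−1)C + alt_{rs}(H). -/

import Mathlib

universe u v

/-- A hypergraph on a vertex type `V`: a collection of subsets of `V`, its edges. -/
structure SetHypergraph (V : Type u) where
  edges : Set (Set V)

namespace SetHypergraph

variable {V : Type u}

/-- The subhypergraph `H[X]` induced by `X ⊆ V`, as a hypergraph on the vertex type `↥X`:
its edges correspond to the edges of `H` that are contained in `X`. -/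
def induce (H : SetHypergraph V) (X : Set V) : SetHypergraph X :=
  ⟨{e : Set X | Subtype.val '' e ∈ H.edges}⟩

/-- A coloring of the vertices is proper if no (nonempty) edge is monochromatic. -/
def IsProper {α : Type v} (H : SetHypergraph V) (c : V → α) : Prop :=
  ∀ e ∈ H.edges, e.Nonempty → ¬ ∃ a, ∀ v ∈ e, c v = a

/-- `H` is `n`-colorable if it admits a proper coloring with `n` colors. -/
def Colorable (H : SetHypergraph V) (n : ℕ) : Prop :=
  ∃ c : V → Fin n, H.IsProper c

/-- The chromatic number of a hypergraph, valued in `ℕ∞` (`⊤` if no proper coloring exists). -/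
noncomputable def chromNum (H : SetHypergraph V) : ℕ∞ :=
  sInf {C : ℕ∞ | ∃ n : ℕ, C = n ∧ H.Colorable n}

/-- The `r`-colorability defect `cd_r(H)`: the minimum number of vertices whose removal
leaves an `r`-colorable induced subhypergraph. -/
noncomputable def cd (H : SetHypergraph V) (r : ℕ) : ℕ∞ :=
  sInf {c : ℕ∞ | ∃ Y : Set V, (H.induce Yᶜ).Colorable r ∧ c = Y.encard}

/-- The Kneser hypergraph `KG^r(H)`: its vertices are the edges of `H`, and its edges are
the sets of `r` pairwise disjoint edges of `H`. -/
def kneser (H : SetHypergraph V) (r : ℕ) : SetHypergraph H.edges :=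
  ⟨{F : Set H.edges | F.encard = r ∧
      F.Pairwise fun e f => Disjoint (e : Set V) (f : Set V)}⟩

end SetHypergraph

/-- The categorical product of a finite family of hypergraphs: a set of vertex tuples is an
edge iff its projection on each coordinate is an edge of the corresponding factor. -/
def hProd {t : ℕ} {W : Fin t → Type u} (H : ∀ i, SetHypergraph (W i)) :
    SetHypergraph (∀ i, W i) :=
  ⟨{e : Set (∀ i, W i) | ∀ i, (fun v => v i) '' e ∈ (H i).edges}⟩

/-- The categorical product of two hypergraphs. -/
def hProd2 {V : Type u} {V' : Type v} (G : SetHypergraph V) (G' : SetHypergraph V') :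
    SetHypergraph (V × V') :=
  ⟨{e : Set (V × V') | Prod.fst '' e ∈ G.edges ∧ Prod.snd '' e ∈ G'.edges}⟩
/-- The maximum length of an alternating subsequence of the nonzero entries of `x`, where
`x ∈ (Z_r ∪ {0})^n` is encoded with `none` for `0` and `ZMod r` for the `r`-th roots of
unity (`j ∈ ZMod r` corresponding to `ω^j`). -/
noncomputable def altSeq {r n : ℕ} (x : Fin n → Option (ZMod r)) : ℕ :=
  sSup {k : ℕ | ∃ f : Fin k → Fin n, StrictMono f ∧ (∀ j, x (f j) ≠ none) ∧
    ∀ (j : ℕ) (h : j + 1 < k), x (f ⟨j, Nat.lt_of_succ_lt h⟩) ≠ x (f ⟨j + 1, h⟩)}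

/-- The `r`-alternation number `alt_r(H)` of a hypergraph: the minimum, over identifications
`π` of `Fin n` with the vertex set (`n = |V(H)|`), of the maximum of `altSeq x` over all
vectors `x ∈ (Z_r ∪ {0})^n` none of whose supports `supp_j(x)` contains an edge of `H`. -/
noncomputable def altNum {V : Type u} (r : ℕ) (H : SetHypergraph V) : ℕ :=
  ⨅ π : Fin (Nat.card V) ≃ V,
    sSup {a : ℕ | ∃ x : Fin (Nat.card V) → Option (ZMod r),
      (∀ j : ZMod r, ∀ E ∈ H.edges, ¬ E ⊆ (fun i => π i) '' {i | x i = some j}) ∧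
      a = altSeq x}


namespace AltAux

variable {r n : ℕ}

def altSet (x : Fin n → Option (ZMod r)) : Set ℕ :=
  {k : ℕ | ∃ f : Fin k → Fin n, StrictMono f ∧ (∀ j, x (f j) ≠ none) ∧
    ∀ (j : ℕ) (h : j + 1 < k), x (f ⟨j, Nat.lt_of_succ_lt h⟩) ≠ x (f ⟨j + 1, h⟩)}

lemma altSeq_eq_sSup (x : Fin n → Option (ZMod r)) : altSeq x = sSup (altSet x) := rfl

lemma zero_mem_altSet (x : Fin n → Option (ZMod r)) : 0 ∈ altSet x :=
  ⟨fun j => j.elim0, fun a => a.elim0, fun j => j.elim0, fun j h => by omega⟩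

lemma altSet_le_card {x : Fin n → Option (ZMod r)} {k : ℕ} (hk : k ∈ altSet x) :
    k ≤ (Finset.univ.filter fun i => x i ≠ none).card := by
  obtain ⟨f, hf, hnz, -⟩ := hk
  classical
  have hmap : ∀ a ∈ (Finset.univ : Finset (Fin k)), f a ∈
      (Finset.univ.filter fun i => x i ≠ none) := by
    intro a _
    simp only [Finset.mem_filter, Finset.mem_univ, true_and]
    exact hnz a
  have := Finset.card_le_card_of_injOn f hmap (hf.injective.injOn)
  simpa using this

lemma bddAbove_altSet (x : Fin n → Option (ZMod r)) : BddAbove (altSet x) :=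
  ⟨(Finset.univ.filter fun i => x i ≠ none).card, fun _ hk => altSet_le_card hk⟩

lemma altSeq_le_card (x : Fin n → Option (ZMod r)) :
    altSeq x ≤ (Finset.univ.filter fun i => x i ≠ none).card :=
  csSup_le' fun _ hk => altSet_le_card hk

lemma altSeq_mem (x : Fin n → Option (ZMod r)) : altSeq x ∈ altSet x :=
  Nat.sSup_mem ⟨0, zero_mem_altSet x⟩ (bddAbove_altSet x)

/-- List version of an alternating sequence. -/
def AltList (x : Fin n → Option (ZMod r)) (l : List (Fin n)) : Prop :=
  l.IsChain (· < ·) ∧ (∀ i ∈ l, x i ≠ none) ∧ l.IsChain (fun a b => x a ≠ x b)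

lemma AltList.length_mem_altSet {x : Fin n → Option (ZMod r)} {l : List (Fin n)}
    (h : AltList x l) : l.length ∈ altSet x := by
  obtain ⟨h1, h2, h3⟩ := h
  refine ⟨l.get, ?_, fun j => h2 _ (l.get_mem _), ?_⟩
  · intro a b hab
    exact List.pairwise_iff_get.mp (List.isChain_iff_pairwise.mp h1) a b hab
  · intro j hj
    exact List.isChain_iff_getElem.mp h3 j (by omega)

lemma AltList.length_le_altSeq {x : Fin n → Option (ZMod r)} {l : List (Fin n)}
    (h : AltList x l) : l.length ≤ altSeq x :=
  le_csSup (bddAbove_altSet x) h.length_mem_altSet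

lemma exists_altList (x : Fin n → Option (ZMod r)) :
    ∃ l : List (Fin n), AltList x l ∧ l.length = altSeq x := by
  obtain ⟨f, hf, hnz, halt⟩ := altSeq_mem x
  refine ⟨List.ofFn f, ⟨?_, ?_, ?_⟩, List.length_ofFn (f := f)⟩
  · rw [List.isChain_iff_getElem]
    intro i h
    rw [List.getElem_ofFn, List.getElem_ofFn]
    apply hf
    simp only [Fin.lt_def, Fin.coe_cast]
    omega
  · intro i hi
    rw [List.mem_ofFn] at hi
    obtain ⟨j, rfl⟩ := hi
    exact hnz j
  · rw [List.isChain_iff_getElem]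
    intro i h
    rw [List.getElem_ofFn, List.getElem_ofFn]
    have hlen : i + 1 < altSeq x := by
      have := (List.length_ofFn (f := f)); omega
    exact halt i hlen


section key

variable {a b n : ℕ}

/-- Choice of an intermediate index fixing a "problem pair". -/
noncomputable def pick (z : Fin n → Option (ZMod b)) (i j : Fin n) : Fin n :=
  if h : ∃ q, i < q ∧ q < j ∧ z q ≠ none ∧ z q ≠ z i ∧ z q ≠ z j then h.choose else i

/-- Repair a strictly increasing list of `z`-nonzero indices into an alternating one. -/
noncomputable def fixList (z : Fin n → Option (ZMod b)) : List (Fin n) → List (Fin n)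
  | [] => []
  | [i] => [i]
  | i :: j :: t =>
      if z i = z j then i :: pick z i j :: fixList z (j :: t)
      else i :: fixList z (j :: t)

def HypE (z : Fin n → Option (ZMod b)) : Prop :=
  ∀ i j : Fin n, i < j → z i ≠ none → z i = z j →
    ∃ q, i < q ∧ q < j ∧ z q ≠ none ∧ z q ≠ z i ∧ z q ≠ z j

lemma pick_spec {z : Fin n → Option (ZMod b)} (hE : HypE z) {i j : Fin n}
    (hij : i < j) (hnz : z i ≠ none) (heq : z i = z j) :
    i < pick z i j ∧ pick z i j < j ∧ z (pick z i j) ≠ none ∧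
      z (pick z i j) ≠ z i ∧ z (pick z i j) ≠ z j := by
  have h := hE i j hij hnz heq
  rw [pick, dif_pos h]
  exact h.choose_spec

lemma fixList_spec {z : Fin n → Option (ZMod b)} (hE : HypE z) :
    ∀ l : List (Fin n), l.IsChain (· < ·) → (∀ i ∈ l, z i ≠ none) →
      (fixList z l).IsChain (· < ·) ∧ (∀ i ∈ fixList z l, z i ≠ none) ∧
      (fixList z l).IsChain (fun p q => z p ≠ z q) ∧
      l.length ≤ (fixList z l).length ∧ (fixList z l).head? = l.head?
  | [] => fun _ _ => by simp [fixList]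
  | [i] => fun _ h => by simp_all [fixList, List.isChain_singleton]
  | i :: j :: t => fun hc hnz => by
    have hij : i < j := (List.isChain_cons_cons.mp hc).1
    have hct : (j :: t).IsChain (· < ·) := (List.isChain_cons_cons.mp hc).2
    have hnzt : ∀ q ∈ j :: t, z q ≠ none := fun q hq => hnz q (List.mem_cons_of_mem _ hq)
    obtain ⟨ih1, ih2, ih3, ih4, ih5⟩ := fixList_spec hE (j :: t) hct hnzt
    have hhead : (fixList z (j :: t)).head? = some j := by rw [ih5]; rfl
    have hnzi : z i ≠ none := hnz i (List.mem_cons_self)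
    by_cases hzz : z i = z j
    · obtain ⟨hq1, hq2, hq3, hq4, hq5⟩ := pick_spec hE hij hnzi hzz
      rw [fixList, if_pos hzz]
      refine ⟨?_, ?_, ?_, ?_, ?_⟩
      · rw [List.isChain_cons, List.isChain_cons]
        refine ⟨fun y hy => by simp at hy; subst hy; exact hq1, fun y hy => ?_, ih1⟩
        rw [hhead] at hy; simp at hy; subst hy; exact hq2
      · intro q hq
        rcases List.mem_cons.mp hq with rfl | hq
        · exact hnzi
        rcases List.mem_cons.mp hq with rfl | hq
        · exact hq3
        · exact ih2 q hq
      · rw [List.isChain_cons, List.isChain_cons]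
        refine ⟨fun y hy => by simp at hy; subst hy; exact fun h => hq4 h.symm, fun y hy => ?_, ih3⟩
        rw [hhead] at hy; simp at hy; subst hy; exact hq5
      · simp only [List.length_cons] at ih4 ⊢; omega
      · rfl
    · rw [fixList, if_neg hzz]
      refine ⟨?_, ?_, ?_, ?_, ?_⟩
      · rw [List.isChain_cons]
        exact ⟨fun y hy => by rw [hhead] at hy; simp at hy; subst hy; exact hij, ih1⟩
      · intro q hq
        rcases List.mem_cons.mp hq with rfl | hq
        · exact hnzi
        · exact ih2 q hq
      · rw [List.isChain_cons]
        exact ⟨fun y hy => by rw [hhead] at hy; simp at hy; subst hy; exact hzz, ih3⟩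
      · simp only [List.length_cons] at ih4 ⊢; omega
      · rfl

end key

section key2
variable {a b n : ℕ}

open Classical in
lemma key_ineq (x : Fin n → Option (ZMod a)) (z : Fin n → Option (ZMod b))
    (h0 : ∀ i, z i ≠ none → x i ≠ none)
    (h1 : ∀ i j, z i ≠ none → z i = z j → x i = x j)
    (h2 : ∀ i j, i < j → z i ≠ none → z j ≠ none → x i = x j →
      (∀ l, i < l → l < j → x l = x i → z l = none) → z i ≠ z j) :
    altSeq x ≤ (Finset.univ.filter fun i => x i ≠ none ∧ z i = none).card + altSeq z := by
  -- derive the pick existence hypothesis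
  have hE : HypE z := by
    intro i j hij hnz heq
    have hnzj : z j ≠ none := heq ▸ hnz
    have hxij : x i = x j := h1 i j hnz heq
    have hT : ∃ q, i < q ∧ q < j ∧ x q = x i ∧ z q ≠ none := by
      by_contra hcon
      push_neg at hcon
      exact h2 i j hij hnz hnzj hxij
        (fun l hl1 hl2 hl3 => by
          by_contra hzl
          exact hzl (hcon l hl1 hl2 hl3)) heq
    classical
    obtain ⟨q0, hq0⟩ := hT
    set T : Finset (Fin n) :=
      Finset.univ.filter (fun q => i < q ∧ q < j ∧ x q = x i ∧ z q ≠ none) with hTdef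
    have hne : T.Nonempty := ⟨q0, by simp [hTdef, hq0.1, hq0.2.1, hq0.2.2.1, hq0.2.2.2]⟩
    set q := T.min' hne with hqdef
    have hqmem : q ∈ T := T.min'_mem hne
    simp only [hTdef, Finset.mem_filter, Finset.mem_univ, true_and] at hqmem
    obtain ⟨hiq, hqj, hxq, hzq⟩ := hqmem
    have hne' : z i ≠ z q := by
      refine h2 i q hiq hnz hzq hxq.symm ?_
      intro l hl1 hl2 hl3
      by_contra hzl
      have hlT : l ∈ T := by
        simp only [hTdef, Finset.mem_filter, Finset.mem_univ, true_and]
        exact ⟨hl1, lt_trans hl2 hqj, hl3, hzl⟩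
      exact absurd (T.min'_le l hlT) (not_le.mpr hl2)
    exact ⟨q, hiq, hqj, hzq, fun h => hne' h.symm, fun h => hne' (heq ▸ h.symm)⟩
  obtain ⟨l, ⟨hl1, hl2, hl3⟩, hlen⟩ := exists_altList x
  set l₂ := l.filter (fun i => z i ≠ none) with hl₂
  have hsub : l₂.Sublist l := List.filter_sublist
  have hl₂c : l₂.IsChain (· < ·) := by
    rw [List.isChain_iff_pairwise] at hl1 ⊢
    exact hl1.sublist hsub
  have hl₂nz : ∀ i ∈ l₂, z i ≠ none := by
    intro i hi
    have := List.of_mem_filter hi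
    simpa using this
  obtain ⟨hf1, hf2, hf3, hf4, -⟩ := fixList_spec hE l₂ hl₂c hl₂nz
  have hfix : AltList z (fixList z l₂) := ⟨hf1, hf2, hf3⟩
  have hlast : (fixList z l₂).length ≤ altSeq z := hfix.length_le_altSeq
  -- count dropped elements
  have hnodup : l.Nodup := by
    rw [List.isChain_iff_pairwise] at hl1
    exact hl1.imp (fun h => ne_of_lt h)
  set ld := l.filter (fun i => z i = none) with hld
  have hsplit : l.length = l₂.length + ld.length := by
    simpa [hl₂, hld, ne_eq, decide_not] using
      List.length_eq_length_filter_add (l := l) (fun i => z i ≠ none)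
  have hldsub : ld.toFinset ⊆ Finset.univ.filter fun i => x i ≠ none ∧ z i = none := by
    intro i hi
    rw [List.mem_toFinset] at hi
    have hmem := List.mem_of_mem_filter hi
    have hprop := List.of_mem_filter hi
    simp only [decide_eq_true_eq] at hprop
    simp only [Finset.mem_filter, Finset.mem_univ, true_and]
    exact ⟨hl2 i hmem, hprop⟩
  have hldnodup : ld.Nodup := hnodup.filter _
  have hldcard : ld.length ≤ (Finset.univ.filter fun i => x i ≠ none ∧ z i = none).card := by
    rw [← List.toFinset_card_of_nodup hldnodup]
    exact Finset.card_le_card hldsub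
  omega

end key2

end AltAux

section classlemma

variable {V : Type u} [Finite V]

open Classical in
lemma class_exists (H : SetHypergraph V) {n : ℕ} (π₀ : Fin n ≃ V)
    {s C r : ℕ} (x : Fin n → Option (ZMod r)) (j : ZMod r)
    (hE0 : ∅ ∉ H.edges)
    (hcard : (π₀ '' {i | x i = some j}).ncard ≤
      (s - 1) * C + altNum s (H.induce (π₀ '' {i | x i = some j}))) :
    ∃ u : Fin n → Option (ZMod s),
      (∀ i, u i ≠ none → x i = some j) ∧
      (∀ t : ZMod s, ∀ E ∈ H.edges, ¬ E ⊆ π₀ '' {i | u i = some t}) ∧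
      ((Finset.univ.filter fun i => x i = some j ∧ u i = none).card ≤ (s - 1) * C) ∧
      (∀ p q : Fin n, p < q → u p ≠ none → u q ≠ none →
        (∀ l, p < l → l < q → u l = none) → u p ≠ u q) := by
  classical
  set A' : Finset (Fin n) := Finset.univ.filter (fun i => x i = some j) with hA'
  set S : Set (Fin n) := {i | x i = some j} with hS
  set A : Set V := π₀ '' S with hA
  have hSA' : S = ↑A' := by ext i; simp [hS, hA']
  set m := A'.card with hm
  have hAcard : A.ncard = m := by
    rw [hA, Set.ncard_image_of_injective _ π₀.injective, hSA', Set.ncard_coe_finset]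
  have hnatcard : Nat.card ↥A = m := by rw [Nat.card_coe_set_eq, hAcard]
  set N := Nat.card ↥A with hN
  set e1 : Fin m ≃o ↥A' := A'.orderIsoOfFin rfl with he1
  set e2 : ↥A' ≃ ↥S := Equiv.subtypeEquivRight (by intro i; simp [hS, hA']) with he2
  set e3 : ↥S ≃ ↥A := Equiv.Set.image π₀ S π₀.injective with he3
  set ρ : Fin N ≃ ↥A := (finCongr hnatcard).trans (e1.toEquiv.trans (e2.trans e3)) with hρ
  have hρval : ∀ d : Fin N, (ρ d : V) = π₀ (e1 (Fin.cast hnatcard d) : Fin n) := by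
    intro d; rfl
  -- the sup over vectors for this particular identification ρ
  set SS : Set ℕ := {a : ℕ | ∃ y : Fin N → Option (ZMod s),
      (∀ t : ZMod s, ∀ E ∈ (H.induce A).edges, ¬ E ⊆ (fun i => ρ i) '' {i | y i = some t}) ∧
      a = altSeq y} with hSS
  have haltle : altNum s (H.induce A) ≤ sSup SS := ciInf_le (OrderBot.bddBelow _) ρ
  have hSSne : SS.Nonempty := by
    refine ⟨altSeq (fun _ : Fin N => (none : Option (ZMod s))),
      fun _ : Fin N => (none : Option (ZMod s)), fun t E hE hsub => ?_, rfl⟩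
    have : E = ∅ := by
      have : (fun i => ρ i) '' {i : Fin N | (none : Option (ZMod s)) = some t} = ∅ := by
        simp
      rw [this] at hsub
      exact Set.subset_empty_iff.mp hsub
    subst this
    apply hE0
    simpa [SetHypergraph.induce, Set.image_empty] using hE
  have hSSbdd : BddAbove SS := by
    refine ⟨N, fun a ha => ?_⟩
    obtain ⟨y, -, rfl⟩ := ha
    calc altSeq y ≤ _ := AltAux.altSeq_le_card y
    _ ≤ N := le_trans (Finset.card_filter_le _ _) (Finset.card_univ.trans (Fintype.card_fin N)).le
  obtain ⟨y, hyval, hysup⟩ := Nat.sSup_mem hSSne hSSbdd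
  set k := altSeq y with hk
  have hmk : m ≤ (s - 1) * C + k := by
    rw [← hAcard]
    calc A.ncard ≤ (s-1)*C + altNum s (H.induce A) := hcard
    _ ≤ (s-1)*C + sSup SS := by omega
    _ = (s-1)*C + k := by rw [← hysup]
  obtain ⟨f, hfmono, hfnz, hfalt⟩ := AltAux.altSeq_mem y
  -- the vector u
  set idx : ∀ i : Fin n, i ∈ A' → Fin N :=
    (fun i hi => Fin.cast hnatcard.symm (e1.symm ⟨i, hi⟩)) with hidx
  set u : Fin n → Option (ZMod s) := fun i =>
    if hi : i ∈ A' then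
      (if (∃ p : Fin k, f p = idx i hi) then y (idx i hi) else none)
    else none with hu
  have humem : ∀ i : Fin n, u i ≠ none → ∃ hi : i ∈ A',
      (∃ p : Fin k, f p = idx i hi) ∧ u i = y (idx i hi) := by
    intro i hui
    by_cases hi : i ∈ A'
    · refine ⟨hi, ?_, ?_⟩
      · by_contra hcon
        rw [hu] at hui; simp only at hui
        rw [dif_pos hi, if_neg hcon] at hui
        exact hui rfl
      · have hex : (∃ p : Fin k, f p = idx i hi) := by
          by_contra hcon
          rw [hu] at hui; simp only at hui
          rw [dif_pos hi, if_neg hcon] at hui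
          exact hui rfl
        rw [hu]; simp only; rw [dif_pos hi, if_pos hex]
    · exfalso; rw [hu] at hui; simp only at hui; rw [dif_neg hi] at hui; exact hui rfl
  -- the inverse relation: images of f are in the support of u
  have hψ : ∀ p : Fin k, (e1 (Fin.cast hnatcard (f p)) : Fin n) ∈ A' ∧
      u (e1 (Fin.cast hnatcard (f p)) : Fin n) = y (f p) := by
    intro p
    set i : Fin n := (e1 (Fin.cast hnatcard (f p)) : Fin n) with hi'
    have hi : i ∈ A' := (e1 (Fin.cast hnatcard (f p))).2
    have hidxi : idx i hi = f p := by
      rw [hidx]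
      simp only
      have : (⟨i, hi⟩ : ↥A') = e1 (Fin.cast hnatcard (f p)) := by
        apply Subtype.ext; rfl
      rw [this, e1.symm_apply_apply]
      apply Fin.ext; simp
    refine ⟨hi, ?_⟩
    rw [hu]; simp only; rw [dif_pos hi, hidxi, if_pos ⟨p, rfl⟩]
  refine ⟨u, ?_, ?_, ?_, ?_⟩
  · -- (i)
    intro i hui
    obtain ⟨hi, -, -⟩ := humem i hui
    have := Finset.mem_filter.mp hi
    exact this.2
  · -- (ii) validity
    intro t E hEedge hsub
    have hEA : E ⊆ A := by
      intro v hv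
      obtain ⟨i, hiu, rfl⟩ := hsub hv
      obtain ⟨hi, -, -⟩ := humem i (by rw [hiu]; exact fun h => (by simp_all))
      exact ⟨i, by rw [hSA']; exact hi, rfl⟩
    set E' : Set ↥A := Subtype.val ⁻¹' E with hE'
    have hE'img : Subtype.val '' E' = E := by
      rw [hE', Subtype.image_preimage_coe]
      exact Set.inter_eq_self_of_subset_right hEA
    have hE'edge : E' ∈ (H.induce A).edges := by
      show Subtype.val '' E' ∈ H.edges
      rw [hE'img]; exact hEedge
    refine hyval t E' hE'edge ?_
    intro v' hv'
    have hvE : (v' : V) ∈ E := hv'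
    obtain ⟨i, hiu, hπi⟩ := hsub hvE
    have hiu' : u i ≠ none := by rw [hiu]; simp
    obtain ⟨hi, -, huiy⟩ := humem i hiu'
    refine ⟨idx i hi, ?_, ?_⟩
    · show y (idx i hi) = some t
      rw [← huiy]; exact hiu
    · apply Subtype.ext
      rw [hρval]
      show π₀ _ = (v' : V)
      rw [← hπi]
      congr 1
      rw [hidx]
      simp only
      congr 1
      have : Fin.cast hnatcard (Fin.cast hnatcard.symm (e1.symm ⟨i, hi⟩)) = e1.symm ⟨i, hi⟩ := by
        apply Fin.ext; simp
      rw [this, e1.apply_symm_apply]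
  · -- (iii) count
    have hpart : A'.card = (A'.filter (fun i => u i = none)).card +
        (A'.filter (fun i => ¬ (u i = none))).card := by
      rw [Finset.card_filter_add_card_filter_not]
    have hGk : k ≤ (A'.filter (fun i => ¬ (u i = none))).card := by
      have hinj : ∀ p ∈ (Finset.univ : Finset (Fin k)),
          ((e1 (Fin.cast hnatcard (f p)) : ↥A') : Fin n) ∈
            A'.filter (fun i => ¬ (u i = none)) := by
        intro p _
        obtain ⟨hi, hui⟩ := hψ p
        refine Finset.mem_filter.mpr ⟨hi, ?_⟩
        rw [hui]
        exact hfnz p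
      have hinj2 : Set.InjOn (fun p : Fin k => ((e1 (Fin.cast hnatcard (f p)) : ↥A') : Fin n))
          ↑(Finset.univ : Finset (Fin k)) := by
        intro p _ q _ hpq
        have h1 : Fin.cast hnatcard (f p) = Fin.cast hnatcard (f q) := by
          apply e1.injective
          exact Subtype.ext hpq
        have h2 : f p = f q := by
          apply Fin.ext
          have := congrArg Fin.val h1
          simpa using this
        exact hfmono.injective h2
      have := Finset.card_le_card_of_injOn _ hinj hinj2
      simpa using this
    have hDj : (Finset.univ.filter fun i => x i = some j ∧ u i = none) =
        A'.filter (fun i => u i = none) := by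
      ext i
      simp only [Finset.mem_filter, Finset.mem_univ, true_and, hA']
    rw [hDj]
    omega
  · -- (iv) alternation within the class
    intro p q hpq hup huq hbet
    obtain ⟨hp, ⟨a, hfa⟩, hupy⟩ := humem p hup
    obtain ⟨hq, ⟨b, hfb⟩, huqy⟩ := humem q huq
    have hab : a < b := by
      have h1 : (⟨p, hp⟩ : ↥A') < ⟨q, hq⟩ := Subtype.mk_lt_mk.mpr hpq
      have h2 : e1.symm ⟨p, hp⟩ < e1.symm ⟨q, hq⟩ := by
        rw [← OrderIso.lt_iff_lt e1.symm] at h1; exact h1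
      have h3 : idx p hp < idx q hq := by
        rw [hidx]; simp only [Fin.lt_def, Fin.coe_cast]; exact h2
      rw [← hfa, ← hfb] at h3
      exact hfmono.lt_iff_lt.mp h3
    by_cases hsucc : (a : ℕ) + 1 = (b : ℕ)
    · have hlt : (a : ℕ) + 1 < k := by omega
      have := hfalt a hlt
      rw [hupy, huqy, ← hfa, ← hfb]
      have ha' : (⟨(a : ℕ), Nat.lt_of_succ_lt hlt⟩ : Fin k) = a := by apply Fin.ext; rfl
      have hb' : (⟨(a : ℕ) + 1, hlt⟩ : Fin k) = b := by apply Fin.ext; simp [hsucc]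
      rw [ha', hb'] at this
      exact this
    · exfalso
      have hlt : (a : ℕ) + 1 < k := by omega
      set c : Fin k := ⟨(a : ℕ) + 1, hlt⟩ with hc
      have hac : a < c := by rw [hc]; simp [Fin.lt_def]
      have hcb : c < b := by rw [hc]; simp [Fin.lt_def]; omega
      set l : Fin n := ((e1 (Fin.cast hnatcard (f c)) : ↥A') : Fin n) with hl
      obtain ⟨hlmem, hul⟩ := hψ c
      have hmono : ∀ d d' : Fin N, d < d' →
          ((e1 (Fin.cast hnatcard d) : ↥A') : Fin n) < ((e1 (Fin.cast hnatcard d') : ↥A') : Fin n) := by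
        intro d d' hdd
        have : Fin.cast hnatcard d < Fin.cast hnatcard d' := by
          simp only [Fin.lt_def, Fin.coe_cast]; exact hdd
        have := e1.strictMono this
        exact this
      have hpl : p < l := by
        have h1 : idx p hp < f c := by rw [← hfa]; exact hfmono hac
        have := hmono _ _ h1
        have hback : ((e1 (Fin.cast hnatcard (idx p hp)) : ↥A') : Fin n) = p := by
          rw [hidx]
          simp only
          have : Fin.cast hnatcard (Fin.cast hnatcard.symm (e1.symm ⟨p, hp⟩)) =
              e1.symm ⟨p, hp⟩ := by apply Fin.ext; simp
          rw [this, e1.apply_symm_apply]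
        rw [hback] at this
        exact this
      have hlq : l < q := by
        have h1 : f c < idx q hq := by rw [← hfb]; exact hfmono hcb
        have := hmono _ _ h1
        have hback : ((e1 (Fin.cast hnatcard (idx q hq)) : ↥A') : Fin n) = q := by
          rw [hidx]
          simp only
          have : Fin.cast hnatcard (Fin.cast hnatcard.symm (e1.symm ⟨q, hq⟩)) =
              e1.symm ⟨q, hq⟩ := by apply Fin.ext; simp
          rw [this, e1.apply_symm_apply]
        rw [hback] at this
        exact this
      have := hbet l hpl hlq
      rw [hul] at this
      exact hfnz c this

end classlemma

section main

variable {V : Type u}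

lemma altNum_induce_eq_zero [Finite V] (H : SetHypergraph V) (s : ℕ) (A : Set V)
    (hE0 : ∅ ∈ H.edges) : altNum s (H.induce A) = 0 := by
  haveI : Nonempty (Fin (Nat.card ↥A) ≃ ↥A) := ⟨(Finite.equivFin ↥A).symm⟩
  obtain ⟨σ⟩ := ‹Nonempty (Fin (Nat.card ↥A) ≃ ↥A)›
  refine Nat.le_zero.mp (le_trans (ciInf_le (OrderBot.bddBelow _) σ) ?_)
  have hempty : {a : ℕ | ∃ x : Fin (Nat.card ↥A) → Option (ZMod s),
      (∀ j : ZMod s, ∀ E ∈ (H.induce A).edges, ¬ E ⊆ (fun i => σ i) '' {i | x i = some j}) ∧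
      a = altSeq x} = ∅ := by
    ext a
    simp only [Set.mem_setOf_eq, Set.mem_empty_iff_false, iff_false]
    rintro ⟨y, hval, -⟩
    have hEmem : (∅ : Set ↥A) ∈ (H.induce A).edges := by
      show Subtype.val '' ∅ ∈ H.edges
      rw [Set.image_empty]
      exact hE0
    exact hval 0 ∅ hEmem (Set.empty_subset _)
  rw [hempty, csSup_empty]
  rfl

end main

/-- **Lemma.** For a hypergraph `H` with finitely many vertices and positive integers
`s, C, r`, let `T̃_{H,C,s}` be the hypergraph with vertex set `V(H)` and edges
`{A ⊆ V(H) : |A| − alt_s(H[A]) > (s−1)C}`. Then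
`alt_r(T̃_{H,C,s}) ≤ r(s−1)C + alt_{rs}(H)`. -/
theorem altNum_auxiliary_le {V : Type u} [Finite V] (H : SetHypergraph V) (s C r : ℕ)
    (hs : 0 < s) (hC : 0 < C) (hr : 0 < r) :
    altNum r (SetHypergraph.mk
        {A : Set V | (s - 1) * C < A.ncard - altNum s (H.induce A)})
      ≤ r * (s - 1) * C + altNum (r * s) H := by
  classical
  haveI : NeZero r := ⟨hr.ne'⟩
  haveI : NeZero s := ⟨hs.ne'⟩
  haveI : NeZero (r * s) := ⟨Nat.mul_ne_zero hr.ne' hs.ne'⟩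
  set n := Nat.card V with hn
  haveI hne : Nonempty (Fin n ≃ V) := ⟨(Finite.equivFin V).symm⟩
  set F : (Fin n ≃ V) → ℕ := fun π => sSup {a : ℕ | ∃ x : Fin n → Option (ZMod (r * s)),
      (∀ j : ZMod (r * s), ∀ E ∈ H.edges, ¬ E ⊆ (fun i => π i) '' {i | x i = some j}) ∧
      a = altSeq x} with hF
  have hiInf : altNum (r * s) H = ⨅ π, F π := rfl
  obtain ⟨π₀, hπ₀⟩ : ∃ π₀, F π₀ = ⨅ π, F π := Nat.sInf_mem (Set.range_nonempty F)
  refine le_trans (ciInf_le (OrderBot.bddBelow _) π₀) (csSup_le' ?_)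
  rintro a ⟨x, hxval, rfl⟩
  -- every support class fails to be an edge of the auxiliary hypergraph
  have hAle : ∀ j : ZMod r, (π₀ '' {i | x i = some j}).ncard ≤
      (s - 1) * C + altNum s (H.induce (π₀ '' {i | x i = some j})) := by
    intro j
    have hnot : ¬ ((s - 1) * C <
        (π₀ '' {i | x i = some j}).ncard -
          altNum s (H.induce (π₀ '' {i | x i = some j}))) := by
      intro hmem
      exact hxval j _ hmem (subset_refl _)
    omega
  have hclasscard : ∀ j : ZMod r, (π₀ '' {i | x i = some j}).ncard =
      (Finset.univ.filter fun i => x i = some j).card := by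
    intro j
    rw [show {i | x i = some j} = ↑(Finset.univ.filter fun i => x i = some j) from by
      ext i; simp, Set.ncard_image_of_injective _ π₀.injective, Set.ncard_coe_finset]
  by_cases hE0 : ∅ ∈ H.edges
  · -- degenerate case: every class is small
    have hsmall : ∀ j : ZMod r, (Finset.univ.filter fun i => x i = some j).card ≤
        (s - 1) * C := by
      intro j
      have h0 := altNum_induce_eq_zero H s (π₀ '' {i | x i = some j}) hE0
      have h1 := hAle j
      have h2 := hclasscard j
      omega
    calc altSeq x ≤ (Finset.univ.filter fun i => x i ≠ none).card :=
          AltAux.altSeq_le_card x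
    _ = ∑ j : ZMod r, ((Finset.univ.filter fun i => x i ≠ none).filter
          (fun i => (x i).getD 0 = j)).card :=
        Finset.card_eq_sum_card_fiberwise (fun i _ => Finset.mem_univ _)
    _ ≤ ∑ j : ZMod r, (s - 1) * C := by
        refine Finset.sum_le_sum fun j _ => ?_
        refine le_trans (Finset.card_le_card ?_) (hsmall j)
        intro i hi
        simp only [Finset.mem_filter, Finset.mem_univ, true_and] at hi ⊢
        obtain ⟨h1, h2⟩ := hi
        cases hx : x i with
        | none => exact absurd hx h1
        | some j' => rw [hx] at h2; simp only [Option.getD_some] at h2; rw [h2]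
    _ = r * ((s - 1) * C) := by
        rw [Finset.sum_const, Finset.card_univ, ZMod.card, smul_eq_mul]
    _ ≤ r * (s - 1) * C + altNum (r * s) H := by rw [mul_assoc]; omega
  · -- main case
    have hclass := fun j : ZMod r =>
      class_exists H π₀ x j hE0 (hAle j)
    choose u hu1 hu2 hu3 hu4 using hclass
    have hcards : Fintype.card (ZMod r × ZMod s) = Fintype.card (ZMod (r * s)) := by
      rw [Fintype.card_prod, ZMod.card, ZMod.card, ZMod.card]
    set ψ : ZMod r × ZMod s ≃ ZMod (r * s) := Fintype.equivOfCardEq hcards with hψdef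
    set z : Fin n → Option (ZMod (r * s)) :=
      fun i => (x i).bind (fun j => (u j i).map (fun t => ψ (j, t))) with hz
    have hzeq : ∀ i, z i = (x i).bind (fun j => (u j i).map (fun t => ψ (j, t))) :=
      fun i => rfl
    have hzsome : ∀ i c, z i = some c →
        ∃ j t, x i = some j ∧ u j i = some t ∧ ψ (j, t) = c := by
      intro i c h
      rw [hzeq i] at h
      obtain ⟨j, hxj, hmap⟩ := Option.bind_eq_some_iff.mp h
      obtain ⟨t, hut, hψt⟩ := Option.map_eq_some_iff.mp hmap
      exact ⟨j, t, hxj, hut, hψt⟩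
    have hznz : ∀ i, z i ≠ none → ∃ j t, x i = some j ∧ u j i = some t ∧
        z i = some (ψ (j, t)) := by
      intro i h
      cases hc : z i with
      | none => exact absurd hc h
      | some c =>
        obtain ⟨j, t, h1, h2, h3⟩ := hzsome i c hc
        exact ⟨j, t, h1, h2, congrArg some h3.symm⟩
    have hznone : ∀ i j, x i = some j → (z i = none ↔ u j i = none) := by
      intro i j hx
      rw [hzeq i, hx]
      cases hut : u j i <;> simp [hut]
    -- hypotheses of the key inequality
    have h0 : ∀ i, z i ≠ none → x i ≠ none := by
      intro i h
      obtain ⟨j, t, h1, -, -⟩ := hznz i h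
      rw [h1]; simp
    have h1 : ∀ i i', z i ≠ none → z i = z i' → x i = x i' := by
      intro i i' hnz heq
      obtain ⟨j, t, ha, hb, hc⟩ := hznz i hnz
      obtain ⟨j', t', ha', hb', hc'⟩ := hznz i' (by rw [← heq]; exact hnz)
      rw [hc, hc'] at heq
      simp only [Option.some.injEq] at heq
      have := ψ.injective heq
      rw [ha, ha', (Prod.mk.injEq _ _ _ _).mp this |>.1]
    have h2 : ∀ i i', i < i' → z i ≠ none → z i' ≠ none → x i = x i' →
        (∀ l, i < l → l < i' → x l = x i → z l = none) → z i ≠ z i' := by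
      intro i i' hlt hnz hnz' hxx hbet
      obtain ⟨j, t, ha, hb, hc⟩ := hznz i hnz
      obtain ⟨j', t', ha', hb', hc'⟩ := hznz i' hnz'
      have hjj : j' = j := by
        rw [ha, ha'] at hxx
        simpa using hxx.symm
      rw [hjj] at ha' hb' hc'
      intro heq
      have hut : u j i ≠ u j i' := by
        refine hu4 j i i' hlt (by rw [hb]; simp) (by rw [hb']; simp) ?_
        intro l hl1 hl2
        cases hxl : x l with
        | none =>
          cases hul : u j l with
          | none => rfl
          | some tt =>
            exfalso
            have := hu1 j l (by rw [hul]; simp)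
            rw [hxl] at this
            exact Option.some_ne_none _ this.symm
        | some j₂ =>
          by_cases hj₂ : j₂ = j
          · subst hj₂
            have hzl := hbet l hl1 hl2 (by rw [hxl, ha])
            exact ((hznone l j₂ hxl).mp hzl)
          · cases hul : u j l with
            | none => rfl
            | some tt =>
              exfalso
              have := hu1 j l (by rw [hul]; simp)
              rw [hxl] at this
              simp only [Option.some.injEq] at this
              exact hj₂ this
      rw [hc, hc'] at heq
      simp only [Option.some.injEq] at heq
      have := ψ.injective heq
      rw [hb, hb', ((Prod.mk.injEq _ _ _ _).mp this).2] at hut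
      exact hut rfl
    have hkey := AltAux.key_ineq x z h0 h1 h2
    -- validity of z
    have hzval : ∀ c : ZMod (r * s), ∀ E ∈ H.edges,
        ¬ E ⊆ (fun i => π₀ i) '' {i | z i = some c} := by
      intro c E hE hsub
      refine hu2 (ψ.symm c).1 (ψ.symm c).2 E hE (hsub.trans (Set.image_mono ?_))
      intro i hi
      obtain ⟨j, t, ha, hb, hcc⟩ := hzsome i c hi
      have : ψ.symm c = (j, t) := by rw [← hcc, ψ.symm_apply_apply]
      rw [this]
      exact hb
    have hzS : altSeq z ≤ altNum (r * s) H := by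
      have hbdd : BddAbove {a : ℕ | ∃ x' : Fin n → Option (ZMod (r * s)),
          (∀ j : ZMod (r * s), ∀ E ∈ H.edges,
            ¬ E ⊆ (fun i => π₀ i) '' {i | x' i = some j}) ∧ a = altSeq x'} := by
        refine ⟨n, fun a ha => ?_⟩
        obtain ⟨x', -, rfl⟩ := ha
        exact le_trans (AltAux.altSeq_le_card x')
          (le_trans (Finset.card_filter_le _ _) (by simp))
      calc altSeq z ≤ F π₀ := le_csSup hbdd ⟨z, hzval, rfl⟩
      _ = altNum (r * s) H := by rw [hπ₀, hiInf]
    -- counting the dropped indices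
    have hcount : (Finset.univ.filter fun i => x i ≠ none ∧ z i = none).card ≤
        r * ((s - 1) * C) := by
      rw [Finset.card_eq_sum_card_fiberwise
        (f := fun i => (x i).getD 0) (t := Finset.univ) (fun i _ => Finset.mem_univ _)]
      calc ∑ j : ZMod r, _ ≤ ∑ j : ZMod r, (s - 1) * C := by
            refine Finset.sum_le_sum fun j _ => ?_
            refine le_trans (Finset.card_le_card ?_) (hu3 j)
            intro i hi
            simp only [Finset.mem_filter, Finset.mem_univ, true_and] at hi ⊢
            obtain ⟨⟨hxne, hzn⟩, hgd⟩ := hi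
            cases hx : x i with
            | none => exact absurd hx hxne
            | some j₂ =>
              rw [hx] at hgd
              simp only [Option.getD_some] at hgd
              subst hgd
              exact ⟨rfl, (hznone i j₂ hx).mp hzn⟩
      _ = r * ((s - 1) * C) := by
            rw [Finset.sum_const, Finset.card_univ, ZMod.card, smul_eq_mul]
    calc altSeq x ≤ _ + altSeq z := hkey
    _ ≤ r * ((s - 1) * C) + altNum (r * s) H := add_le_add hcount hzS
    _ = r * (s - 1) * C + altNum (r * s) H := by rw [mul_assoc]
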